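/- The generating function B_b(x) = Σ_n M_b(n) x^n of the sequence M_b(n) = Σ_{j=0}^n (C(n+j,j) - C(n+j,j-1))·b^{n-j} satisfies B_b(x)·(1 - b·x·C(x)) = C(x), where C(x) is the Catalan generating function satisfying C(x) = 1 + x·C(x)^2. -/

import Mathlib

open Finset PowerSeries

namespace Stmt17Aux

/-- Ballot numbers as rationals. -/
def a (n j : ℕ) : ℚ :=
  ((n + j).choose j : ℚ) - if j = 0 then 0 else ((n + j).choose (j - 1) : ℚ)

/-- The coefficient polynomials. -/
noncomputable def Mp (n : ℕ) : Polynomial ℚ :=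
  ∑ j ∈ Finset.range (n + 1),
    Polynomial.C (a n j) * Polynomial.X ^ (n - j)

lemma a_zero (n : ℕ) : a n 0 = 1 := by simp [a]

lemma pascal (n j : ℕ) : a (n + 1) (j + 1) = a n (j + 1) + a (n + 1) j := by
  cases j with
  | zero =>
    simp only [a, if_neg (Nat.one_ne_zero), if_pos rfl]
    rw [show n + 1 + 1 = (n + 1) + 1 from rfl]
    push_cast [Nat.choose_one_right, Nat.choose_zero_right]
    ring
  | succ k =>
    simp only [a, if_neg (Nat.succ_ne_zero _), Nat.add_sub_cancel]
    have h1 : (n + 1 + (k + 1 + 1)).choose (k + 1 + 1)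
        = (n + (k + 1) + 1).choose (k + 1) + (n + (k + 1) + 1).choose (k + 1 + 1) := by
      rw [show n + 1 + (k + 1 + 1) = (n + (k + 1) + 1) + 1 from by omega]
      exact Nat.choose_succ_succ _ _
    have h2 : (n + 1 + (k + 1 + 1)).choose (k + 1)
        = (n + (k + 1) + 1).choose k + (n + (k + 1) + 1).choose (k + 1) := by
      rw [show n + 1 + (k + 1 + 1) = (n + (k + 1) + 1) + 1 from by omega]
      exact Nat.choose_succ_succ _ _
    rw [show n + 1 + (k + 1) = n + (k + 1) + 1 from by omega]
    push_cast [h1, h2]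
    ring

lemma a_succ_self (n : ℕ) : a n (n + 1) = 0 := by
  simp only [a, if_neg (Nat.succ_ne_zero _), Nat.add_sub_cancel]
  rw [show n + (n + 1) = 2 * n + 1 from by omega, Nat.choose_symm_half]
  ring

lemma a_diag (n : ℕ) : a n n = (catalan n : ℚ) := by
  cases n with
  | zero => simp [a]
  | succ m =>
    simp only [a, if_neg (Nat.succ_ne_zero _), Nat.add_sub_cancel]
    have h1 : ((2 * m + 2).choose (m + 1) : ℚ) * (m + 1)
        = ((2 * m + 2).choose m : ℚ) * (m + 2) := by
      have := Nat.choose_succ_right_eq (2 * m + 2) m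
      rw [show 2 * m + 2 - m = m + 2 from by omega] at this
      exact_mod_cast this
    have h2 : ((m : ℚ) + 2) * (catalan (m + 1) : ℚ) = ((2 * m + 2).choose (m + 1) : ℚ) := by
      have := succ_mul_catalan_eq_centralBinom (m + 1)
      rw [Nat.centralBinom] at this
      rw [show 2 * (m + 1) = 2 * m + 2 from by omega] at this
      exact_mod_cast this
    rw [show m + 1 + (m + 1) = 2 * m + 2 from by omega]
    have hne : ((m : ℚ) + 2) ≠ 0 := by positivity
    apply mul_left_cancel₀ hne
    ring_nf
    ring_nf at h1 h2
    linarith [h1, h2]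

lemma a_diag' (n : ℕ) : a (n + 1) n = (catalan (n + 1) : ℚ) := by
  have := pascal n n
  rw [a_succ_self, a_diag] at this
  linarith [this]

lemma key (m : ℕ) :
    Mp (m + 1) + Polynomial.X ^ 2 * Mp m
      = Polynomial.C ((catalan (m + 1) : ℚ)) + Polynomial.X * Mp (m + 1) := by
  set S1 : Polynomial ℚ :=
    ∑ j ∈ Finset.range (m + 1), Polynomial.C (a (m + 1) j) * Polynomial.X ^ (m + 1 - j) with hS1
  set S2 : Polynomial ℚ :=
    ∑ j ∈ Finset.range (m + 1), Polynomial.C (a m (j + 1)) * Polynomial.X ^ (m + 1 - j) with hS2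
  have hL1 : Mp (m + 1) = S1 + Polynomial.C ((catalan (m + 1) : ℚ)) := by
    rw [Mp, Finset.sum_range_succ, a_diag, Nat.sub_self, pow_zero, mul_one]
  have hL2 : Polynomial.X ^ 2 * Mp m = S2 + Polynomial.X ^ (m + 2) := by
    rw [Mp, Finset.mul_sum]
    have e1 : ∀ j ∈ Finset.range (m + 1),
        Polynomial.X ^ 2 * (Polynomial.C (a m j) * Polynomial.X ^ (m - j))
          = Polynomial.C (a m j) * Polynomial.X ^ (m + 2 - j) := by
      intro j hj
      rw [Finset.mem_range] at hj
      rw [show m + 2 - j = (m - j) + 2 from by omega]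
      ring
    rw [Finset.sum_congr rfl e1, Finset.sum_range_succ']
    have e2 : ∀ j ∈ Finset.range m,
        Polynomial.C (a m (j + 1)) * Polynomial.X ^ (m + 2 - (j + 1))
          = Polynomial.C (a m (j + 1)) * Polynomial.X ^ (m + 1 - j) := by
      intro j hj
      rw [show m + 2 - (j + 1) = m + 1 - j from by omega]
    rw [Finset.sum_congr rfl e2, a_zero, map_one, one_mul, Nat.sub_zero, hS2,
      Finset.sum_range_succ, a_succ_self, map_zero, zero_mul, add_zero]
  have hR : Polynomial.X * Mp (m + 1) = S2 + S1 + Polynomial.X ^ (m + 2) := by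
    rw [Mp, Finset.mul_sum]
    have e1 : ∀ j ∈ Finset.range (m + 2),
        Polynomial.X * (Polynomial.C (a (m + 1) j) * Polynomial.X ^ (m + 1 - j))
          = Polynomial.C (a (m + 1) j) * Polynomial.X ^ (m + 2 - j) := by
      intro j hj
      rw [Finset.mem_range] at hj
      rw [show m + 2 - j = (m + 1 - j) + 1 from by omega]
      ring
    rw [Finset.sum_congr rfl e1, Finset.sum_range_succ']
    have e2 : ∀ j ∈ Finset.range (m + 1),
        Polynomial.C (a (m + 1) (j + 1)) * Polynomial.X ^ (m + 2 - (j + 1))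
          = Polynomial.C (a m (j + 1)) * Polynomial.X ^ (m + 1 - j)
            + Polynomial.C (a (m + 1) j) * Polynomial.X ^ (m + 1 - j) := by
      intro j hj
      rw [show m + 2 - (j + 1) = m + 1 - j from by omega, pascal, map_add]
      ring
    rw [Finset.sum_congr rfl e2, Finset.sum_add_distrib, a_zero, map_one, one_mul,
      Nat.sub_zero, ← hS1, ← hS2]
  rw [hL2, hR, hL1]
  ring

end Stmt17Aux

open Stmt17Aux in
theorem stmt_17 (Cat : PowerSeries (Polynomial ℚ))
    (hCat : Cat = 1 + PowerSeries.X * Cat ^ 2)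
    (hCat0 : PowerSeries.constantCoeff (R := Polynomial ℚ) Cat = 1) :
    (PowerSeries.mk fun n : ℕ =>
        ∑ j ∈ Finset.range (n + 1),
          Polynomial.C (((n + j).choose j : ℚ) -
              if j = 0 then 0 else ((n + j).choose (j - 1) : ℚ)) *
            Polynomial.X ^ (n - j)) *
        (1 - PowerSeries.C (R := Polynomial ℚ) Polynomial.X * PowerSeries.X * Cat) = Cat := by
  have hcoeff : ∀ n, PowerSeries.coeff (R := Polynomial ℚ) n Cat
      = Polynomial.C ((catalan n : ℚ)) := by
    intro n
    induction n using Nat.strong_induction_on with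
    | _ n ih =>
      match n with
      | 0 =>
        rw [PowerSeries.coeff_zero_eq_constantCoeff, hCat0]
        simp
      | (n + 1) =>
        conv_lhs => rw [hCat]
        rw [map_add, PowerSeries.coeff_one, if_neg (Nat.succ_ne_zero n),
          PowerSeries.coeff_succ_X_mul, sq, PowerSeries.coeff_mul]
        have e : ∀ p ∈ Finset.HasAntidiagonal.antidiagonal n,
            PowerSeries.coeff (R := Polynomial ℚ) p.1 Cat * PowerSeries.coeff (R := Polynomial ℚ) p.2 Cat
              = Polynomial.C ((catalan p.1 : ℚ) * (catalan p.2 : ℚ)) := by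
          intro p hp
          rw [Finset.HasAntidiagonal.mem_antidiagonal] at hp
          rw [ih p.1 (by omega), ih p.2 (by omega), map_mul]
        rw [Finset.sum_congr rfl e, ← map_sum, zero_add]
        congr 1
        rw [catalan_succ']
        push_cast
        rfl
  set b : PowerSeries (Polynomial ℚ) := PowerSeries.C (R := Polynomial ℚ) Polynomial.X with hb
  show PowerSeries.mk Mp * (1 - b * PowerSeries.X * Cat) = Cat
  have E1 : PowerSeries.mk Mp * (1 - b + b ^ 2 * PowerSeries.X) = Cat - b := by
    have expand : PowerSeries.mk Mp * (1 - b + b ^ 2 * PowerSeries.X)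
        = PowerSeries.mk Mp - b * PowerSeries.mk Mp
          + b * (b * (PowerSeries.X * PowerSeries.mk Mp)) := by ring
    rw [expand]
    refine PowerSeries.ext fun n => ?_
    rw [map_add, map_sub, PowerSeries.coeff_mk, hb, PowerSeries.coeff_C_mul,
      PowerSeries.coeff_C_mul, PowerSeries.coeff_C_mul, map_sub, PowerSeries.coeff_C,
      hcoeff]
    match n with
    | 0 =>
      rw [PowerSeries.coeff_zero_X_mul, PowerSeries.coeff_mk]
      simp [Mp, a]
    | (n + 1) =>
      rw [PowerSeries.coeff_succ_X_mul, PowerSeries.coeff_mk, PowerSeries.coeff_mk,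
        if_neg (Nat.succ_ne_zero n)]
      have := key n
      rw [sub_zero]
      linear_combination this
  have hfac : (Cat - b) * (1 - b * PowerSeries.X * Cat)
      = Cat * (1 - b + b ^ 2 * PowerSeries.X) := by
    linear_combination b * hCat
  have hd : (1 - b + b ^ 2 * PowerSeries.X : PowerSeries (Polynomial ℚ)) ≠ 0 := by
    intro h
    have h0 := congrArg (PowerSeries.constantCoeff (R := Polynomial ℚ)) h
    simp only [map_add, map_sub, map_one, map_mul, map_pow, hb,
      PowerSeries.constantCoeff_C, PowerSeries.constantCoeff_X, mul_zero, add_zero,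
      map_zero] at h0
    have h1 := congrArg (fun p => Polynomial.coeff p 1) h0
    simp [Polynomial.coeff_one] at h1
  apply mul_right_cancel₀ hd
  calc PowerSeries.mk Mp * (1 - b * PowerSeries.X * Cat) * (1 - b + b ^ 2 * PowerSeries.X)
      = PowerSeries.mk Mp * (1 - b + b ^ 2 * PowerSeries.X) * (1 - b * PowerSeries.X * Cat) := by
        ring
    _ = (Cat - b) * (1 - b * PowerSeries.X * Cat) := by rw [E1]
    _ = Cat * (1 - b + b ^ 2 * PowerSeries.X) := hfac
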